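/- Let p be a prime, h a non-square nonzero element of 𝔽_p, ξ a root of X^p − X − h, and K = 𝔽_p(ξ). Then for every a ∈ 𝔽_p, the element a + ξ is not a square in K. -/

import Mathlib

open Polynomial

set_option maxHeartbeats 1000000

theorem translate_of_root_not_square (p : ℕ) [Fact p.Prime] (h : ZMod p) (hh : h ≠ 0)
    (hns : ¬ IsSquare h)
    (K : Type*) [Field K] [Finite K] [Algebra (ZMod p) K] [FiniteDimensional (ZMod p) K]
    (hrank : Module.finrank (ZMod p) K = p)
    (ξ : K) (hξ : ξ ^ p - ξ - algebraMap (ZMod p) K h = 0)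
    (a : ZMod p) :
    ¬ IsSquare (algebraMap (ZMod p) K a + ξ) := by
  have hp : p.Prime := Fact.out
  have hcharp : CharP K p :=
    charP_of_injective_algebraMap (algebraMap (ZMod p) K).injective p
  haveI : ExpChar K p := ExpChar.prime hp
  set Y : K := algebraMap (ZMod p) K a + ξ with hYdef
  -- Y satisfies Y^p - Y = h
  have hY : Y ^ p - Y = algebraMap (ZMod p) K h := by
    rw [hYdef, add_pow_char, ← map_pow, ZMod.pow_card]
    have := hξ
    ring_nf
    ring_nf at this
    linear_combination this
  -- the Artin–Schreier polynomial
  set f : (ZMod p)[X] := X ^ p - X - C h with hfdef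
  have hpdeg : 1 < p := hp.one_lt
  have hpm : (p - 1) + 1 = p := by omega
  have hfeq : f = X ^ ((p - 1) + 1) - (X + C h) := by
    rw [hfdef, hpm]; ring
  have hdegsmall : (X + C h : (ZMod p)[X]).degree < ((p - 1) + 1 : ℕ) := by
    rw [Polynomial.degree_X_add_C]
    exact_mod_cast (by omega : 1 < (p - 1) + 1)
  have hfmonic : f.Monic := by
    rw [hfeq]; exact Polynomial.monic_X_pow_sub hdegsmall
  have hfdeg : f.natDegree = p := by
    have hdeg : f.degree = p := by
      rw [hfeq, Polynomial.degree_sub_eq_left_of_degree_lt]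
      · rw [Polynomial.degree_X_pow, hpm]
      · rwa [Polynomial.degree_X_pow]
    exact Polynomial.natDegree_eq_of_degree_eq_some hdeg
  have hY_int : IsIntegral (ZMod p) Y := IsIntegral.of_finite _ _
  have haev : Polynomial.aeval Y f = 0 := by
    simp only [hfdef, map_sub, map_pow, aeval_X, aeval_C]
    rw [hY]; ring
  -- Y is not in the base field
  have hYnotrange : Y ∉ (algebraMap (ZMod p) K).range := by
    rintro ⟨c, hc⟩
    apply hh
    have h2 : algebraMap (ZMod p) K (c ^ p - c) = algebraMap (ZMod p) K h := by
      rw [map_sub, map_pow, hc]; exact hY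
    have h3 := (algebraMap (ZMod p) K).injective h2
    rwa [ZMod.pow_card, sub_self, eq_comm] at h3
  -- minpoly degree is p
  have hdvd : (minpoly (ZMod p) Y).natDegree ∣ p := by
    have := minpoly.degree_dvd (K := ZMod p) (L := K) hY_int
    rwa [hrank] at this
  have hdeg_min : (minpoly (ZMod p) Y).natDegree = p := by
    rcases (Nat.Prime.eq_one_or_self_of_dvd hp _ hdvd) with h1 | h1
    · exact absurd (minpoly.natDegree_eq_one_iff.mp h1) hYnotrange
    · exact h1
  -- minpoly = f
  have hmin : minpoly (ZMod p) Y = f := by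
    have hdvdf : minpoly (ZMod p) Y ∣ f := minpoly.dvd _ _ haev
    obtain ⟨q, hq⟩ := hdvdf
    have hmne : minpoly (ZMod p) Y ≠ 0 := minpoly.ne_zero hY_int
    have hqne : q ≠ 0 := by rintro rfl; simp [hq] at hfdeg; omega
    have : f.natDegree = (minpoly (ZMod p) Y).natDegree + q.natDegree := by
      rw [hq, Polynomial.natDegree_mul hmne hqne]
    have hq0 : q.natDegree = 0 := by omega
    have hqmonic : q.Monic := by
      have := hfmonic
      rw [hq] at this
      exact (minpoly.monic hY_int).of_mul_monic_left this
    rw [hq, Polynomial.eq_one_of_monic_natDegree_zero hqmonic hq0, mul_one]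
  -- build a power basis with generator Y
  have hsep : Algebra.IsSeparable (ZMod p) K := inferInstance
  have hadj_top : Algebra.adjoin (ZMod p) ({Y} : Set K) = ⊤ := by
    let pb0 := Algebra.adjoin.powerBasis (K := ZMod p) hY_int
    have hfinrankS : Module.finrank (ZMod p) (Algebra.adjoin (ZMod p) ({Y} : Set K)) = p := by
      rw [pb0.finrank]
      exact hdeg_min
    rw [← Algebra.toSubmodule_eq_top]
    apply Submodule.eq_top_of_finrank_eq
    have heq : Module.finrank (ZMod p)
        (Subalgebra.toSubmodule (Algebra.adjoin (ZMod p) ({Y} : Set K))) =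
        Module.finrank (ZMod p) (Algebra.adjoin (ZMod p) ({Y} : Set K)) := rfl
    rw [heq, hfinrankS, hrank]
  let B := Field.powerBasisOfFiniteOfSeparable (ZMod p) K
  let pb : PowerBasis (ZMod p) K := PowerBasis.ofAdjoinEqTop hY_int (B.adjoin_eq_top_of_gen_mem_adjoin (by rw [hadj_top]; trivial))
  have hgen : pb.gen = Y := rfl
  have hdim : pb.dim = p := by
    have h1 := pb.finrank
    rw [hrank] at h1
    exact h1.symm
  -- compute the norm of Y
  have hnorm : Algebra.norm (ZMod p) Y = h := by
    have := Algebra.PowerBasis.norm_gen_eq_coeff_zero_minpoly pb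
    rw [hgen, hmin, hdim] at this
    have hc0 : f.coeff 0 = -h := by
      rw [hfdef]
      simp only [coeff_sub, coeff_X_pow, coeff_X_zero, coeff_C_zero]
      rw [if_neg (by omega : ¬ (0 = p))]
      ring
    rw [hc0] at this
    rw [this]
    have hneg : ((-1 : ZMod p)) ^ p = -1 := by
      rcases hp.eq_two_or_odd' with rfl | hodd
      · rw [CharTwo.neg_eq, one_pow]
      · exact hodd.neg_one_pow
    rw [hneg]; ring
  -- conclude
  rintro ⟨z, hz⟩
  apply hns
  refine ⟨Algebra.norm (ZMod p) z, ?_⟩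
  rw [← hnorm, hz, map_mul]
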